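/- The operator G*G : H → H (G* the Hilbert-space adjoint of G) is self-adjoint and positive, and it is boundedly invertible on the range of G: G*G maps (ker T)⊥ bijectively onto itself and there exists a constant c′ > 0 such that ⟪(G*G)x, x⟫ ≥ c′‖x‖² for all x ∈ (ker T)⊥. -/

import Mathlib

open scoped RealInnerProductSpace

/-- The operator `G*G` is self-adjoint and positive, and it is boundedly invertible
on the range of `G`, i.e. on `(ker T)ᗮ`: it maps `(ker T)ᗮ` bijectively onto itself
and is uniformly coercive there. -/
theorem normal_operator_selfadjoint_positive_invertible
    {V H : Type*} [NormedAddCommGroup V] [InnerProductSpace ℝ V] [CompleteSpace V]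
    [NormedAddCommGroup H] [InnerProductSpace ℝ H] [CompleteSpace H]
    (B : V →L[ℝ] V) (α : ℝ) (hα : 0 < α)
    (hB : ∀ v : V, α * ‖v‖ ^ 2 ≤ ⟪B v, v⟫)
    (T : H →L[ℝ] V) (hT : Function.Surjective T)
    (G : H →L[ℝ] H) (hG : G = (ContinuousLinearMap.adjoint T).comp (B.comp T))
    (G₂ : H →L[ℝ] H) (hG₂ : G₂ = (ContinuousLinearMap.adjoint G).comp G) :
    IsSelfAdjoint G₂ ∧
    (∀ x : H, 0 ≤ ⟪G₂ x, x⟫) ∧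
    (∀ x ∈ (LinearMap.ker (T : H →ₗ[ℝ] V))ᗮ, G₂ x ∈ (LinearMap.ker (T : H →ₗ[ℝ] V))ᗮ) ∧
    Set.BijOn G₂ ((LinearMap.ker (T : H →ₗ[ℝ] V))ᗮ : Set H) ((LinearMap.ker (T : H →ₗ[ℝ] V))ᗮ : Set H) ∧
    ∃ c' : ℝ, 0 < c' ∧ ∀ x ∈ (LinearMap.ker (T : H →ₗ[ℝ] V))ᗮ, c' * ‖x‖ ^ 2 ≤ ⟪G₂ x, x⟫ := by
  set K : Submodule ℝ H := (LinearMap.ker (T : H →ₗ[ℝ] V))ᗮ with hK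
  -- basic inner product identities
  have hG₂inner : ∀ x : H, ⟪G₂ x, x⟫ = ‖G x‖ ^ 2 := by
    intro x
    rw [hG₂]
    simp only [ContinuousLinearMap.comp_apply]
    rw [ContinuousLinearMap.adjoint_inner_left, real_inner_self_eq_norm_sq]
  have hGker : ∀ u : H, u ∈ LinearMap.ker (T : H →ₗ[ℝ] V) → G u = 0 := by
    intro u hu
    rw [hG]
    simp only [ContinuousLinearMap.comp_apply]
    rw [show T u = 0 from LinearMap.mem_ker.mp hu]
    simp
  -- G₂ maps everything into K
  have hmem : ∀ x : H, G₂ x ∈ K := by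
    intro x
    rw [Submodule.mem_orthogonal]
    intro u hu
    rw [hG₂]
    simp only [ContinuousLinearMap.comp_apply]
    rw [real_inner_comm, ContinuousLinearMap.adjoint_inner_left,
      ← real_inner_comm, hGker u hu, inner_zero_left]
  -- self-adjointness
  have hsa : IsSelfAdjoint G₂ := by
    rw [hG₂, IsSelfAdjoint, ContinuousLinearMap.star_eq_adjoint,
      ContinuousLinearMap.adjoint_comp, ContinuousLinearMap.adjoint_adjoint]
  -- positivity
  have hpos : ∀ x : H, 0 ≤ ⟪G₂ x, x⟫ := by
    intro x; rw [hG₂inner]; positivity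
  -- lower bound for T on K
  obtain ⟨C, hC0, hC⟩ := T.exists_preimage_norm_le hT
  have hTlow : ∀ x : H, x ∈ K → ‖x‖ ≤ C * ‖T x‖ := by
    intro x hx
    obtain ⟨z, hz, hznorm⟩ := hC (T x)
    have hxz : x - z ∈ LinearMap.ker (T : H →ₗ[ℝ] V) := by
      rw [LinearMap.mem_ker]; simp [hz]
    have h0 : ⟪x - z, x⟫ = 0 :=
      (Submodule.mem_orthogonal (LinearMap.ker (T : H →ₗ[ℝ] V)) x).mp hx _ hxz
    have : ‖x‖ ^ 2 = ⟪z, x⟫ := by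
      have := real_inner_self_eq_norm_sq x
      have h' : ⟪x, x⟫ = ⟪z, x⟫ + ⟪x - z, x⟫ := by
        rw [← inner_add_left]; congr 1; abel
      rw [← this, h', h0, add_zero]
    have hle : ‖x‖ ^ 2 ≤ (C * ‖T x‖) * ‖x‖ := by
      calc ‖x‖ ^ 2 = ⟪z, x⟫ := this
        _ ≤ ‖z‖ * ‖x‖ := real_inner_le_norm z x
        _ ≤ (C * ‖T x‖) * ‖x‖ := by
            apply mul_le_mul_of_nonneg_right hznorm (norm_nonneg x)
    rcases eq_or_lt_of_le (norm_nonneg x) with h | h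
    · rw [← h]; positivity
    · have h2 : ‖x‖ * ‖x‖ ≤ (C * ‖T x‖) * ‖x‖ := by rw [← sq]; exact hle
      exact le_of_mul_le_mul_right h2 h
  -- coercivity of G on K
  have hGcoer : ∀ x : H, x ∈ K → (α / C ^ 2) * ‖x‖ ^ 2 ≤ ⟪G x, x⟫ := by
    intro x hx
    have hTx2 : ‖x‖ ^ 2 ≤ C ^ 2 * ‖T x‖ ^ 2 := by
      have := hTlow x hx
      calc ‖x‖ ^ 2 ≤ (C * ‖T x‖) ^ 2 := by
            apply pow_le_pow_left₀ (norm_nonneg x) this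
        _ = C ^ 2 * ‖T x‖ ^ 2 := by ring
    have hGxx : ⟪G x, x⟫ = ⟪B (T x), T x⟫ := by
      rw [hG]
      simp only [ContinuousLinearMap.comp_apply]
      rw [ContinuousLinearMap.adjoint_inner_left]
    rw [hGxx]
    calc (α / C ^ 2) * ‖x‖ ^ 2 ≤ (α / C ^ 2) * (C ^ 2 * ‖T x‖ ^ 2) := by
          apply mul_le_mul_of_nonneg_left hTx2 (by positivity)
      _ = α * ‖T x‖ ^ 2 := by field_simp
      _ ≤ ⟪B (T x), T x⟫ := hB (T x)
  set c : ℝ := α / C ^ 2 with hc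
  have hc0 : 0 < c := by positivity
  -- lower bound for G on K and coercivity of G₂
  have hG₂coer : ∀ x : H, x ∈ K → (c ^ 2) * ‖x‖ ^ 2 ≤ ⟪G₂ x, x⟫ := by
    intro x hx
    rw [hG₂inner]
    have hGlow : c * ‖x‖ ≤ ‖G x‖ := by
      rcases eq_or_lt_of_le (norm_nonneg x) with h | h
      · rw [← h]; simp
      · have h1 : c * ‖x‖ * ‖x‖ ≤ ‖G x‖ * ‖x‖ := by
          calc c * ‖x‖ * ‖x‖ = c * ‖x‖ ^ 2 := by ring
            _ ≤ ⟪G x, x⟫ := hGcoer x hx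
            _ ≤ ‖G x‖ * ‖x‖ := real_inner_le_norm _ _
        exact le_of_mul_le_mul_right h1 h
    calc c ^ 2 * ‖x‖ ^ 2 = (c * ‖x‖) ^ 2 := by ring
      _ ≤ ‖G x‖ ^ 2 := by
          apply pow_le_pow_left₀ (by positivity) hGlow
  -- injectivity on K
  have hinj : Set.InjOn G₂ (K : Set H) := by
    intro x hx y hy hxy
    have hxyK : x - y ∈ K := K.sub_mem hx hy
    have h0 : ⟪G₂ (x - y), x - y⟫ = 0 := by
      rw [map_sub, hxy, sub_self, inner_zero_left]
    have hcoe := hG₂coer (x - y) hxyK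
    rw [h0] at hcoe
    have hs : ‖x - y‖ ^ 2 = 0 := by nlinarith [pow_pos hc0 2, sq_nonneg ‖x - y‖]
    have hxy0 : ‖x - y‖ = 0 := sq_eq_zero_iff.mp hs
    exact sub_eq_zero.mp (norm_eq_zero.mp hxy0)
  -- surjectivity on K via Lax-Milgram
  haveI : CompleteSpace K := (Submodule.isClosed_orthogonal _).completeSpace_coe
  have hsurj : Set.SurjOn G₂ (K : Set H) (K : Set H) := by
    set S : K →L[ℝ] K :=
      ContinuousLinearMap.codRestrict (G₂.comp K.subtypeL) K (fun x => hmem x) with hS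
    set b : K →L[ℝ] K →L[ℝ] ℝ := (innerSL ℝ).comp S with hb
    have hbapp : ∀ u w : K, b u w = ⟪(S u : H), (w : H)⟫ := fun u w => rfl
    have hcoerb : IsCoercive b := by
      refine ⟨c ^ 2, by positivity, fun u => ?_⟩
      rw [hbapp]
      have : (S u : H) = G₂ (u : H) := rfl
      rw [this]
      have := hG₂coer (u : H) u.2
      calc c ^ 2 * ‖u‖ * ‖u‖ = c ^ 2 * ‖(u : H)‖ ^ 2 := by
            rw [Submodule.norm_coe]; ring
        _ ≤ ⟪G₂ (u : H), (u : H)⟫ := this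
    intro y hy
    set e := hcoerb.continuousLinearEquivOfBilin with he
    have heS : ∀ u : K, e u = S u := by
      intro u
      apply ext_inner_right ℝ
      intro w
      rw [hcoerb.continuousLinearEquivOfBilin_apply]
      exact (hbapp u w).symm
    refine ⟨(e.symm ⟨y, hy⟩ : K), (e.symm ⟨y, hy⟩ : K).2, ?_⟩
    have : S (e.symm ⟨y, hy⟩) = ⟨y, hy⟩ := by
      rw [← heS]; exact e.apply_symm_apply _
    have := congrArg (Subtype.val) this
    exact this
  exact ⟨hsa, hpos, fun x _ => hmem x,
    ⟨fun x _ => hmem x, hinj, hsurj⟩,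
    ⟨c ^ 2, by positivity, fun x hx => hG₂coer x hx⟩⟩
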